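/- Let ℓ : ℝ → ℝ be a C¹ function, α ∈ ℝ, d ≥ 1, n ≥ 0, and fix an index i with 2 ≤ i ≤ d+1. On ℝ^{2(d+1)+n} with coordinates (x₁, …, x_{d+1}, y₁, …, y_{d+1}, z₁, …, z_n), consider the ODE system: ẋ₁ = 1; ẏ₁ = −α ℓ′(2x₁ − 1)(x_i² + y_i²); ẋ_i = α ℓ(2x₁ − 1) y_i; ẏ_i = −α ℓ(2x₁ − 1) x_i; and all remaining coordinates constant. Then for every initial condition p = (x, y, z) the unique solution γ(t) with γ(0) = p is given explicitly by: x₁(t) = x₁ + t; x_i(t)² + y_i(t)² = x_i² + y_i² for all t; (x_i(t), y_i(t)) = R_{−θ(t)}(x_i, y_i), where θ(t) = α ∫₀^t ℓ(2x₁ + 2s − 1) ds; y₁(t) = y₁ − (α/2)[ℓ(2x₁ + 2t − 1) − ℓ(2x₁ − 1)](x_i² + y_i²); and all other coordinates equal to those of p. -/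

import Mathlib

open Real

section Helpers

variable {E F : Type*} [NormedAddCommGroup E] [NormedSpace ℝ E]
  [NormedAddCommGroup F] [NormedSpace ℝ F]

lemma hasDerivAt_fst' {f : ℝ → E × F} {f' : E × F} {x : ℝ} (h : HasDerivAt f f' x) :
    HasDerivAt (fun t => (f t).1) f'.1 x := by
  simpa [Function.comp_def] using ((ContinuousLinearMap.fst ℝ E F).hasFDerivAt).comp_hasDerivAt x h

lemma hasDerivAt_snd' {f : ℝ → E × F} {f' : E × F} {x : ℝ} (h : HasDerivAt f f' x) :
    HasDerivAt (fun t => (f t).2) f'.2 x := by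
  simpa [Function.comp_def] using ((ContinuousLinearMap.snd ℝ E F).hasFDerivAt).comp_hasDerivAt x h

lemma const_of_hasDerivAt_zero {g : ℝ → ℝ} (h : ∀ t, HasDerivAt g 0 t) (t : ℝ) : g t = g 0 :=
  is_const_of_deriv_eq_zero (fun s => (h s).differentiableAt) (fun s => (h s).deriv) t 0

end Helpers

noncomputable def vf19 {d n : ℕ} (ℓ : ℝ → ℝ) (α : ℝ) (i : Fin (d + 1))
    (p : (Fin (d + 1) → ℝ) × (Fin (d + 1) → ℝ) × (Fin n → ℝ)) :
    (Fin (d + 1) → ℝ) × (Fin (d + 1) → ℝ) × (Fin n → ℝ) :=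
  (fun j => if j = 0 then 1 else if j = i then α * ℓ (2 * p.1 0 - 1) * p.2.1 i else 0,
   fun j =>
     if j = 0 then -(α * deriv ℓ (2 * p.1 0 - 1) * (p.1 i ^ 2 + p.2.1 i ^ 2))
     else if j = i then -(α * ℓ (2 * p.1 0 - 1) * p.1 i) else 0,
   0)

set_option maxHeartbeats 1000000 in
/-- the explicit solution of the system `vf19`: `x₁(t) = x₁ + t`,
`(x_i(t), y_i(t)) = R_{-θ(t)}(x_i, y_i)` with `θ(t) = α ∫₀ᵗ ℓ(2x₁ + 2s - 1) ds`,
`y₁(t) = y₁ - (α/2)[ℓ(2x₁+2t-1) - ℓ(2x₁-1)](x_i² + y_i²)`, other coordinates constant;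
in particular `x_i(t)² + y_i(t)²` is constant, and this solution is unique. -/
theorem stmt_19 (d n : ℕ) (hd : 1 ≤ d) (ℓ : ℝ → ℝ) (hℓ : ContDiff ℝ 1 ℓ) (α : ℝ)
    (i : Fin (d + 1)) (hi : i ≠ 0)
    (p : (Fin (d + 1) → ℝ) × (Fin (d + 1) → ℝ) × (Fin n → ℝ))
    (θ : ℝ → ℝ)
    (hθ : θ = fun t => α * ∫ s in (0 : ℝ)..t, ℓ (2 * p.1 0 + 2 * s - 1))
    (γ : ℝ → (Fin (d + 1) → ℝ) × (Fin (d + 1) → ℝ) × (Fin n → ℝ))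
    (hγ : γ = fun t =>
      (fun j => if j = 0 then p.1 0 + t
        else if j = i then p.1 i * Real.cos (θ t) + p.2.1 i * Real.sin (θ t)
        else p.1 j,
       fun j => if j = 0 then
          p.2.1 0 - α / 2 * (ℓ (2 * p.1 0 + 2 * t - 1) - ℓ (2 * p.1 0 - 1))
            * (p.1 i ^ 2 + p.2.1 i ^ 2)
        else if j = i then -(p.1 i * Real.sin (θ t)) + p.2.1 i * Real.cos (θ t)
        else p.2.1 j,
       p.2.2)) :
    γ 0 = p ∧
    (∀ t, HasDerivAt γ (vf19 ℓ α i (γ t)) t) ∧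
    (∀ t, (γ t).1 i ^ 2 + (γ t).2.1 i ^ 2 = p.1 i ^ 2 + p.2.1 i ^ 2) ∧
    (∀ δ : ℝ → (Fin (d + 1) → ℝ) × (Fin (d + 1) → ℝ) × (Fin n → ℝ),
      δ 0 = p → (∀ t, HasDerivAt δ (vf19 ℓ α i (δ t)) t) → δ = γ) := by
  have hℓd : Differentiable ℝ ℓ := hℓ.differentiable one_ne_zero
  have hcont : Continuous fun s : ℝ => ℓ (2 * p.1 0 + 2 * s - 1) :=
    hℓ.continuous.comp (by continuity)
  have hθd : ∀ t, HasDerivAt θ (α * ℓ (2 * p.1 0 + 2 * t - 1)) t := by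
    intro t; rw [hθ]
    exact ((hcont.integral_hasStrictDerivAt 0 t).hasDerivAt).const_mul α
  have hθ0 : θ 0 = 0 := by simp [hθ]
  have hinner : ∀ t : ℝ, HasDerivAt (fun t : ℝ => 2 * p.1 0 + 2 * t - 1) 2 t := by
    intro t
    simpa using (((hasDerivAt_id t).const_mul 2).const_add (2 * p.1 0)).sub_const 1
  have hL : ∀ t, HasDerivAt (fun t => ℓ (2 * p.1 0 + 2 * t - 1))
      (deriv ℓ (2 * p.1 0 + 2 * t - 1) * 2) t := fun t =>
    ((hℓd _).hasDerivAt).comp t (hinner t)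
  -- derivative of the explicit rotating components
  have hX : ∀ t, HasDerivAt (fun t => p.1 i * cos (θ t) + p.2.1 i * sin (θ t))
      (α * ℓ (2 * p.1 0 + 2 * t - 1) * (-(p.1 i * sin (θ t)) + p.2.1 i * cos (θ t))) t := by
    intro t
    have h1 := ((hθd t).cos).const_mul (p.1 i)
    have h2 := ((hθd t).sin).const_mul (p.2.1 i)
    exact (h1.add h2).congr_deriv (by ring)
  have hY : ∀ t, HasDerivAt (fun t => -(p.1 i * sin (θ t)) + p.2.1 i * cos (θ t))
      (-(α * ℓ (2 * p.1 0 + 2 * t - 1) * (p.1 i * cos (θ t) + p.2.1 i * sin (θ t)))) t := by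
    intro t
    have h1 := (((hθd t).sin).const_mul (p.1 i)).neg
    have h2 := ((hθd t).cos).const_mul (p.2.1 i)
    exact (h1.add h2).congr_deriv (by ring)
  have hY1 : ∀ t, HasDerivAt (fun t =>
      p.2.1 0 - α / 2 * (ℓ (2 * p.1 0 + 2 * t - 1) - ℓ (2 * p.1 0 - 1))
        * (p.1 i ^ 2 + p.2.1 i ^ 2))
      (-(α * deriv ℓ (2 * p.1 0 + 2 * t - 1) * (p.1 i ^ 2 + p.2.1 i ^ 2))) t := by
    intro t
    have h1 := ((((hL t).sub_const (ℓ (2 * p.1 0 - 1))).const_mul (α / 2)).mul_const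
      (p.1 i ^ 2 + p.2.1 i ^ 2)).const_sub (p.2.1 0)
    exact (h1).congr_deriv (by ring)
  have h0i : (0 : Fin (d + 1)) ≠ i := fun h => hi h.symm
  have hsq : ∀ t, (p.1 i * cos (θ t) + p.2.1 i * sin (θ t)) ^ 2
      + (-(p.1 i * sin (θ t)) + p.2.1 i * cos (θ t)) ^ 2 = p.1 i ^ 2 + p.2.1 i ^ 2 := by
    intro t
    linear_combination (p.1 i ^ 2 + p.2.1 i ^ 2) * sin_sq_add_cos_sq (θ t)
  have hvf : ∀ t, vf19 ℓ α i (γ t) =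
      (fun j => if j = 0 then 1 else if j = i then
          α * ℓ (2 * p.1 0 + 2 * t - 1) * (-(p.1 i * sin (θ t)) + p.2.1 i * cos (θ t)) else 0,
       fun j => if j = 0 then
          -(α * deriv ℓ (2 * p.1 0 + 2 * t - 1) * (p.1 i ^ 2 + p.2.1 i ^ 2))
        else if j = i then
          -(α * ℓ (2 * p.1 0 + 2 * t - 1) * (p.1 i * cos (θ t) + p.2.1 i * sin (θ t))) else 0,
       0) := by
    intro t
    rw [hγ]
    simp only [vf19]
    refine Prod.ext ?_ (Prod.ext ?_ rfl) <;> funext j <;> split_ifs <;>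
      simp_all [hsq t, show (2:ℝ) * (p.1 0 + t) - 1 = 2 * p.1 0 + 2 * t - 1 from by ring]
  refine ⟨?_, ?_, ?_, ?_⟩
  · -- initial condition
    rw [hγ]
    refine Prod.ext ?_ (Prod.ext ?_ rfl) <;> funext j <;>
      simp only [] <;> split_ifs with h1 h2 <;> subst_vars <;> simp [hθ0]
  · -- the ODE
    intro t
    rw [hvf t, hγ]
    refine HasDerivAt.prodMk ?_ (HasDerivAt.prodMk ?_ (hasDerivAt_const t _)) <;>
      refine hasDerivAt_pi.2 fun j => ?_
    · by_cases hj0 : j = 0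
      · subst hj0
        simp only [if_pos rfl]
        simpa using (hasDerivAt_id t).const_add (p.1 0)
      · by_cases hji : j = i
        · subst hji
          simp only [if_neg hj0, if_pos rfl]
          exact hX t
        · simp only [if_neg hj0, if_neg hji]
          exact hasDerivAt_const t _
    · by_cases hj0 : j = 0
      · subst hj0
        simp only [if_pos rfl]
        exact hY1 t
      · by_cases hji : j = i
        · subst hji
          simp only [if_neg hj0, if_pos rfl]
          exact hY t
        · simp only [if_neg hj0, if_neg hji]
          exact hasDerivAt_const t _
  · -- conservation
    intro t
    rw [hγ]
    simp only [if_neg hi, if_pos rfl, if_true, eq_self_iff_true]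
    exact hsq t
  · -- uniqueness
    intro δ hδ0 hδD
    have hδ1 : ∀ t j, HasDerivAt (fun t => (δ t).1 j) ((vf19 ℓ α i (δ t)).1 j) t :=
      fun t j => hasDerivAt_pi.1 (hasDerivAt_fst' (hδD t)) j
    have hδ2 : ∀ t j, HasDerivAt (fun t => (δ t).2.1 j) ((vf19 ℓ α i (δ t)).2.1 j) t :=
      fun t j => hasDerivAt_pi.1 (hasDerivAt_fst' (hasDerivAt_snd' (hδD t))) j
    have hδ3 : ∀ t (k : Fin n), HasDerivAt (fun t => (δ t).2.2 k) 0 t := by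
      intro t k
      have := hasDerivAt_pi.1 (hasDerivAt_snd' (hasDerivAt_snd' (hδD t))) k
      simpa [vf19] using this
    -- x₁ coordinate
    have hx1 : ∀ t, (δ t).1 0 = p.1 0 + t := by
      have h : ∀ t, HasDerivAt (fun t => (δ t).1 0 - t) 0 t := by
        intro t
        have h1 := hδ1 t 0
        simp only [vf19, if_pos rfl] at h1
        simpa [Pi.sub_def] using h1.sub (hasDerivAt_id t)
      intro t
      have := const_of_hasDerivAt_zero h t
      simp only [hδ0, sub_zero] at this
      linarith
    -- constant coordinates
    have hcx : ∀ j, j ≠ 0 → j ≠ i → ∀ t, (δ t).1 j = p.1 j := by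
      intro j hj0 hji t
      have h : ∀ t, HasDerivAt (fun t => (δ t).1 j) 0 t := by
        intro t
        have h1 := hδ1 t j
        simpa [vf19, if_neg hj0, if_neg hji] using h1
      simpa [hδ0] using const_of_hasDerivAt_zero h t
    have hcy : ∀ j, j ≠ 0 → j ≠ i → ∀ t, (δ t).2.1 j = p.2.1 j := by
      intro j hj0 hji t
      have h : ∀ t, HasDerivAt (fun t => (δ t).2.1 j) 0 t := by
        intro t
        have h1 := hδ2 t j
        simpa [vf19, if_neg hj0, if_neg hji] using h1
      simpa [hδ0] using const_of_hasDerivAt_zero h t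
    have hcz : ∀ t, (δ t).2.2 = p.2.2 := by
      intro t
      funext k
      have := const_of_hasDerivAt_zero (fun t => hδ3 t k) t
      simpa [hδ0] using this
    -- rotating coordinates
    have hXd : ∀ t, HasDerivAt (fun t => (δ t).1 i)
        (α * ℓ (2 * p.1 0 + 2 * t - 1) * (δ t).2.1 i) t := by
      intro t
      have h1 := hδ1 t i
      simp only [vf19, if_neg hi, if_pos rfl] at h1
      rw [hx1 t, show 2 * (p.1 0 + t) - 1 = 2 * p.1 0 + 2 * t - 1 by ring] at h1
      exact h1
    have hYd : ∀ t, HasDerivAt (fun t => (δ t).2.1 i)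
        (-(α * ℓ (2 * p.1 0 + 2 * t - 1) * (δ t).1 i)) t := by
      intro t
      have h1 := hδ2 t i
      simp only [vf19, if_neg hi, if_pos rfl] at h1
      rw [hx1 t, show 2 * (p.1 0 + t) - 1 = 2 * p.1 0 + 2 * t - 1 by ring] at h1
      exact h1
    have hU : ∀ t, (δ t).1 i * cos (θ t) - (δ t).2.1 i * sin (θ t) = p.1 i := by
      have hder : ∀ t, HasDerivAt
          (fun t => (δ t).1 i * cos (θ t) - (δ t).2.1 i * sin (θ t)) 0 t := by
        intro t
        have h1 := (hXd t).mul ((hθd t).cos)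
        have h2 := (hYd t).mul ((hθd t).sin)
        exact (h1.sub h2).congr_deriv (by ring)
      intro t
      have := const_of_hasDerivAt_zero hder t
      rw [this, hδ0, hθ0]
      simp
    have hV : ∀ t, (δ t).1 i * sin (θ t) + (δ t).2.1 i * cos (θ t) = p.2.1 i := by
      have hder : ∀ t, HasDerivAt
          (fun t => (δ t).1 i * sin (θ t) + (δ t).2.1 i * cos (θ t)) 0 t := by
        intro t
        have h1 := (hXd t).mul ((hθd t).sin)
        have h2 := (hYd t).mul ((hθd t).cos)
        exact (h1.add h2).congr_deriv (by ring)
      intro t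
      have := const_of_hasDerivAt_zero hder t
      rw [this, hδ0, hθ0]
      simp
    have hXv : ∀ t, (δ t).1 i = p.1 i * cos (θ t) + p.2.1 i * sin (θ t) := by
      intro t
      have h1 := hU t
      have h2 := hV t
      have hs := sin_sq_add_cos_sq (θ t)
      linear_combination cos (θ t) * h1 + sin (θ t) * h2 - (δ t).1 i * hs
    have hYv : ∀ t, (δ t).2.1 i = -(p.1 i * sin (θ t)) + p.2.1 i * cos (θ t) := by
      intro t
      have h1 := hU t
      have h2 := hV t
      have hs := sin_sq_add_cos_sq (θ t)
      linear_combination (-sin (θ t)) * h1 + cos (θ t) * h2 - (δ t).2.1 i * hs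
    have hC : ∀ t, (δ t).1 i ^ 2 + (δ t).2.1 i ^ 2 = p.1 i ^ 2 + p.2.1 i ^ 2 := by
      intro t
      rw [hXv t, hYv t]
      linear_combination (p.1 i ^ 2 + p.2.1 i ^ 2) * sin_sq_add_cos_sq (θ t)
    -- y₁ coordinate
    have hy1 : ∀ t, (δ t).2.1 0 =
        p.2.1 0 - α / 2 * (ℓ (2 * p.1 0 + 2 * t - 1) - ℓ (2 * p.1 0 - 1))
          * (p.1 i ^ 2 + p.2.1 i ^ 2) := by
      have hder : ∀ t, HasDerivAt (fun t => (δ t).2.1 0 -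
          (p.2.1 0 - α / 2 * (ℓ (2 * p.1 0 + 2 * t - 1) - ℓ (2 * p.1 0 - 1))
            * (p.1 i ^ 2 + p.2.1 i ^ 2))) 0 t := by
        intro t
        have h1 := hδ2 t 0
        simp only [vf19, if_pos rfl] at h1
        rw [hx1 t, show 2 * (p.1 0 + t) - 1 = 2 * p.1 0 + 2 * t - 1 by ring, hC t] at h1
        simpa [Pi.sub_def] using h1.sub (hY1 t)
      intro t
      have := const_of_hasDerivAt_zero hder t
      have h0 : (2 : ℝ) * p.1 0 + 2 * 0 - 1 = 2 * p.1 0 - 1 := by ring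
      rw [hδ0, h0] at this
      simp only [sub_self, mul_zero, zero_mul, mul_zero, sub_zero] at this
      linarith [this]
    -- conclude
    funext t
    rw [hγ]
    refine Prod.ext ?_ (Prod.ext ?_ (hcz t))
    · funext j
      by_cases hj0 : j = 0
      · subst hj0; simp only [if_pos rfl]; exact hx1 t
      · by_cases hji : j = i
        · subst hji; simp only [if_neg hj0, if_pos rfl]; exact hXv t
        · simp only [if_neg hj0, if_neg hji]; exact hcx j hj0 hji t
    · funext j
      by_cases hj0 : j = 0
      · subst hj0; simp only [if_pos rfl]; exact hy1 t
      · by_cases hji : j = i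
        · subst hji; simp only [if_neg hj0, if_pos rfl]; exact hYv t
        · simp only [if_neg hj0, if_neg hji]; exact hcy j hj0 hji t
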